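/- Let 1 < a < b be integers and let T be i.i.d. over {a,b} with P(T_n = a) = p ∈ (0,1), X = O_T. Then for all n ≥ b + 1, P(X_n = a) = p exactly. -/

import Mathlib

def dirStep (X : List ℕ) (k t : ℕ) : List ℕ :=
  let X' := X ++ [t]
  X' ++ List.replicate (X'.getD k 1 - 1) t

/-- The word directed by the finite directing word `T`: at step `i` (0-indexed),
append `t_i` followed by `X[i] - 1` further copies of `t_i`. -/
def dirWord (T : List ℕ) : List ℕ :=
  (T.foldl (fun p t => (dirStep p.1 p.2 t, p.2 + 1)) (([] : List ℕ), 0)).1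

/-- The `n`-th letter (1-indexed) of the infinite sequence directed by `T`
(whose meaningful indices are `1, 2, …`). -/
def dirSeq (T : ℕ → ℕ) (n : ℕ) : ℕ :=
  (dirWord (List.ofFn fun i : Fin n => T (i + 1))).getD (n - 1) 0

open MeasureTheory ProbabilityTheory Filter

lemma dirStep_eq (X : List ℕ) (k t : ℕ) :
    dirStep X k t = X ++ List.replicate ((X ++ [t]).getD k 1 - 1 + 1) t := by
  simp [dirStep, List.replicate_succ, List.append_assoc]

lemma foldl_snd (T : List ℕ) (l : List ℕ) (k : ℕ) :
    (T.foldl (fun p t => (dirStep p.1 p.2 t, p.2 + 1)) (l, k)).2 = k + T.length := by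
  induction T generalizing l k with
  | nil => simp
  | cons x xs ih => simp [List.foldl_cons, ih]; omega

lemma dirWord_concat (T : List ℕ) (x : ℕ) :
    dirWord (T ++ [x]) = dirStep (dirWord T) T.length x := by
  unfold dirWord
  rw [List.foldl_append]
  have h2 := foldl_snd T ([] : List ℕ) 0
  simp only [List.foldl_cons, List.foldl_nil]
  rw [show (T.foldl (fun p t => (dirStep p.1 p.2 t, p.2 + 1)) (([] : List ℕ), 0))
      = ((T.foldl (fun p t => (dirStep p.1 p.2 t, p.2 + 1)) (([] : List ℕ), 0)).1,
         T.length) from Prod.ext rfl (by simpa using h2)]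

def W (t : ℕ → ℕ) (i : ℕ) : List ℕ := dirWord (List.ofFn fun j : Fin i => t (j.1 + 1))

lemma W_succ (t : ℕ → ℕ) (i : ℕ) : W t (i + 1) = dirStep (W t i) i (t (i + 1)) := by
  have : (List.ofFn fun j : Fin (i+1) => t (j.1 + 1))
      = (List.ofFn fun j : Fin i => t (j.1 + 1)) ++ [t (i + 1)] := by
    rw [List.ofFn_succ']
    simp [List.concat_eq_append]
  rw [W, this, dirWord_concat]
  simp [W]

lemma L_lt (t : ℕ → ℕ) (i : ℕ) : (W t i).length < (W t (i + 1)).length := by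
  rw [W_succ, dirStep_eq]
  simp

lemma L_mono (t : ℕ → ℕ) {i j : ℕ} (h : i ≤ j) : (W t i).length ≤ (W t j).length := by
  induction j with
  | zero => simpa using (by omega : i = 0) ▸ le_refl _
  | succ m ih =>
    rcases Nat.lt_or_ge i (m+1) with h'|h'
    · exact le_trans (ih (by omega)) (L_lt t m).le
    · have : i = m + 1 := by omega
      subst this; exact le_refl _

lemma le_L (t : ℕ → ℕ) (i : ℕ) : i ≤ (W t i).length := by
  induction i with
  | zero => simp
  | succ m ih => exact Nat.lt_of_le_of_lt ih (L_lt t m)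

lemma W_prefix (t : ℕ → ℕ) {i j : ℕ} (h : i ≤ j) : W t i <+: W t j := by
  induction j with
  | zero => simpa using (by omega : i = 0) ▸ List.prefix_refl _
  | succ m ih =>
    rcases Nat.lt_or_ge i (m+1) with h'|h'
    · refine (ih (by omega)).trans ?_
      rw [W_succ, dirStep_eq]; exact List.prefix_append _ _
    · have : i = m + 1 := by omega
      subst this; exact List.prefix_refl _

lemma W_getD_eq (t : ℕ → ℕ) (i m : ℕ) (h1 : (W t i).length ≤ m)
    (h2 : m < (W t (i + 1)).length) : (W t (i + 1)).getD m 0 = t (i + 1) := by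
  rw [W_succ, dirStep_eq] at h2 ⊢
  rw [List.length_append, List.length_replicate] at h2
  rw [List.getD_append_right _ _ _ _ h1]
  rw [List.getD_eq_getElem _ _ (by rw [List.length_replicate]; omega)]
  simp

lemma dirSeq_eq (t : ℕ → ℕ) {i n : ℕ} (h1 : (W t i).length < n)
    (h2 : n ≤ (W t (i + 1)).length) : dirSeq t n = t (i + 1) := by
  have hin : i + 1 ≤ n := Nat.lt_of_le_of_lt (le_L t i) h1
  have hpre : W t (i + 1) <+: W t n := W_prefix t hin
  obtain ⟨r, hr⟩ := hpre
  have : dirSeq t n = (W t n).getD (n - 1) 0 := rfl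
  rw [this, ← hr, List.getD_append _ _ _ _ (by omega)]
  exact W_getD_eq t i (n - 1) (by omega) (by omega)

lemma W_mem (t : ℕ → ℕ) {a b : ℕ} (i : ℕ)
    (hgood : ∀ k, 1 ≤ k → k ≤ i → t k = a ∨ t k = b) :
    ∀ y ∈ W t i, y = a ∨ y = b := by
  induction i with
  | zero => intro y hy; simp [W, dirWord] at hy
  | succ m ih =>
    intro y hy
    rw [W_succ, dirStep_eq, List.mem_append] at hy
    rcases hy with hy | hy
    · exact ih (fun k hk1 hk2 => hgood k hk1 (by omega)) y hy
    · rw [List.eq_of_mem_replicate hy]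
      exact hgood (m + 1) (by omega) (by omega)

lemma two_mul_le_L (t : ℕ → ℕ) {a b : ℕ} (ha : 2 ≤ a) (hb : 2 ≤ b) (i : ℕ) (hi : 1 ≤ i)
    (hgood : ∀ k, 1 ≤ k → k ≤ i → t k = a ∨ t k = b) :
    2 * i ≤ (W t i).length := by
  induction i with
  | zero => omega
  | succ m ih =>
    rcases Nat.eq_or_lt_of_le hi with h1 | h1
    · -- i = 1
      have : m = 0 := by omega
      subst this
      rw [W_succ, dirStep_eq]
      have := hgood 1 le_rfl le_rfl
      simp [W, dirWord]
      rcases this with h | h <;> rw [h] <;> omega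
    · have hm1 : 1 ≤ m := by omega
      have hIH := ih hm1 (fun k hk1 hk2 => hgood k hk1 (by omega))
      have hmlt : m < (W t m).length := by omega
      rw [W_succ, dirStep_eq, List.length_append, List.length_replicate]
      have hg : (W t m ++ [t (m+1)]).getD m 1 = (W t m).getD m 1 :=
        List.getD_append _ _ _ _ hmlt
      have hmem : (W t m).getD m 1 = a ∨ (W t m).getD m 1 = b := by
        rw [List.getD_eq_getElem _ _ hmlt]
        exact W_mem t m (fun k hk1 hk2 => hgood k hk1 (by omega)) _ (List.getElem_mem _)
      rcases hmem with h | h <;> rw [hg, h] <;> omega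

lemma L_succ_eq (t : ℕ → ℕ) {a b : ℕ} (ha : 2 ≤ a) (hb : 2 ≤ b) (i : ℕ) (hi : 1 ≤ i)
    (hgood : ∀ k, 1 ≤ k → k ≤ i → t k = a ∨ t k = b) :
    (W t (i + 1)).length = (W t i).length + (W t i).getD i 1 := by
  have hmlt : i < (W t i).length := by
    have := two_mul_le_L t ha hb i hi hgood; omega
  rw [W_succ, dirStep_eq, List.length_append, List.length_replicate,
    List.getD_append _ _ _ _ hmlt]
  have hmem : (W t i).getD i 1 = a ∨ (W t i).getD i 1 = b := by
    rw [List.getD_eq_getElem _ _ hmlt]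
    exact W_mem t i hgood _ (List.getElem_mem _)
  omega

lemma W_congr {f g : ℕ → ℕ} (i : ℕ) (h : ∀ k, 1 ≤ k → k ≤ i → f k = g k) :
    W f i = W g i := by
  unfold W
  rw [show (List.ofFn fun j : Fin i => f (j.1+1)) = List.ofFn fun j : Fin i => g (j.1+1)
    from congrArg List.ofFn (funext fun j => h _ (Nat.succ_le_succ (Nat.zero_le _)) j.2)]

lemma dirSeq_congr {f g : ℕ → ℕ} (n : ℕ) (h : ∀ k, 1 ≤ k → k ≤ n → f k = g k) :
    dirSeq f n = dirSeq g n := by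
  unfold dirSeq
  rw [show (List.ofFn fun j : Fin n => f (j.1+1)) = List.ofFn fun j : Fin n => g (j.1+1)
    from congrArg List.ofFn (funext fun j => h _ (Nat.succ_le_succ (Nat.zero_le _)) j.2)]

lemma L_one (t : ℕ → ℕ) (h : 1 ≤ t 1) : (W t 1).length = t 1 := by
  have : W t 1 = dirStep [] 0 (t 1) := by
    rw [show (1:ℕ) = 0 + 1 from rfl, W_succ]; rfl
  rw [this, dirStep_eq]
  simp; omega

lemma meas_of_depends {Ω : Type*} [MeasurableSpace Ω] (T : ℕ → Ω → ℕ)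
    (hmeas : ∀ n, Measurable (T n)) (m : ℕ) (P : (ℕ → ℕ) → Prop)
    (hP : ∀ f g : ℕ → ℕ, (∀ k, 1 ≤ k → k ≤ m → f k = g k) → P f → P g) :
    MeasurableSet {ω | P (fun k => T k ω)} := by
  classical
  have hΦ : Measurable (fun ω (j : Fin m) => T (j.1 + 1) ω) :=
    measurable_pi_lambda _ (fun j => hmeas _)
  have hset : {ω | P (fun k => T k ω)} = (fun ω (j : Fin m) => T (j.1 + 1) ω) ⁻¹'
      {v : Fin m → ℕ | P (fun k => if h : 1 ≤ k ∧ k ≤ m then v ⟨k - 1, by omega⟩ else 0)} := by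
    ext ω
    simp only [Set.mem_setOf_eq, Set.mem_preimage]
    have hagree : ∀ k, 1 ≤ k → k ≤ m →
        (fun k => T k ω) k = (if h : 1 ≤ k ∧ k ≤ m then T (k - 1 + 1) ω else 0) := by
      intro k h1 h2
      rw [dif_pos ⟨h1, h2⟩, show k - 1 + 1 = k by omega]
    constructor
    · exact fun h => hP _ _ hagree h
    · exact fun h => hP _ _ (fun k h1 h2 => (hagree k h1 h2).symm) h
  rw [hset]
  exact hΦ ((Set.to_countable _).measurableSet)

open MeasureTheory ProbabilityTheory Filter

/-- over the alphabet {a,b} with 1 < a < b, for an i.i.d.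
directing sequence with P(T_n = a) = p ∈ (0,1) and P(T_n = b) = 1 - p,
for all n ≥ b + 1, P(X_n = a) = p. -/
theorem stmt15 {Ω : Type*} [MeasurableSpace Ω] (μ : Measure Ω)
    [IsProbabilityMeasure μ] (a b : ℕ) (ha : 1 < a) (hab : a < b)
    (p : ℝ) (hp : p ∈ Set.Ioo (0 : ℝ) 1)
    (T : ℕ → Ω → ℕ) (hmeas : ∀ n, Measurable (T n))
    (hindep : iIndepFun T μ)
    (h1 : ∀ n, 1 ≤ n → μ {ω | T n ω = a} = ENNReal.ofReal p)
    (h2 : ∀ n, 1 ≤ n → μ {ω | T n ω = b} = ENNReal.ofReal (1 - p)) :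
    ∀ n, b + 1 ≤ n →
      μ {ω | dirSeq (fun k => T k ω) n = a} = ENNReal.ofReal p := by
  classical
  intro n hn
  have ha2 : 2 ≤ a := ha
  have hb2 : 2 ≤ b := by omega
  have hbn : b < n := by omega
  set A : Set Ω := {ω | dirSeq (fun k => T k ω) n = a} with hA
  set E : ℕ → Set Ω := fun i => {ω |
      (∀ k, 1 ≤ k → k ≤ i → T k ω = a ∨ T k ω = b) ∧
      (W (fun k => T k ω) i).length < n ∧
      n ≤ (W (fun k => T k ω) (i + 1)).length} with hEdef
  -- measurability
  have measA : MeasurableSet A :=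
    meas_of_depends T hmeas n (fun t => dirSeq t n = a)
      (by intro f g hfg h
          show dirSeq g n = a
          rw [← dirSeq_congr n hfg]
          exact h)
  have measE : ∀ i, MeasurableSet (E i) := by
    intro i
    apply meas_of_depends T hmeas (i + 1) (fun t =>
      (∀ k, 1 ≤ k → k ≤ i → t k = a ∨ t k = b) ∧
      (W t i).length < n ∧ n ≤ (W t (i + 1)).length)
    rintro f g hfg ⟨hg1, hg2, hg3⟩
    have hWi : W f i = W g i := W_congr i (fun k h1 h2 => hfg k h1 (by omega))
    have hWi1 : W f (i + 1) = W g (i + 1) := W_congr (i + 1) hfg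
    exact ⟨fun k h1 h2 => by rw [← hfg k h1 (by omega)]; exact hg1 k h1 h2,
      by rw [← hWi]; exact hg2, by rw [← hWi1]; exact hg3⟩
  -- pairwise disjoint
  have hpd : ∀ i j : ℕ, i ≠ j → Disjoint (E i) (E j) := by
    have key : ∀ i j, i < j → Disjoint (E i) (E j) := by
      intro i j hij
      rw [Set.disjoint_left]
      rintro ω ⟨_, _, h2⟩ ⟨_, h3, _⟩
      have := L_mono (fun k => T k ω) (show i + 1 ≤ j by omega)
      omega
    intro i j h
    rcases h.lt_or_gt with h | h
    exacts [key i j h, (key j i h).symm]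
  -- cover
  have hcover : ∀ ω, (∀ k, 1 ≤ k → k ≤ n → T k ω = a ∨ T k ω = b) →
      ω ∈ ⋃ i ∈ Finset.range n, E i := by
    intro ω hgood
    have hex : ∃ j, n ≤ (W (fun k => T k ω) j).length := ⟨n, le_L _ n⟩
    have hj : n ≤ (W (fun k => T k ω) (Nat.find hex)).length := Nat.find_spec hex
    have hj0 : Nat.find hex ≠ 0 := by
      intro h
      rw [h] at hj
      simp [W, dirWord] at hj
      omega
    obtain ⟨i, hieq⟩ : ∃ i, Nat.find hex = i + 1 := ⟨Nat.find hex - 1, by omega⟩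
    have hi : (W (fun k => T k ω) i).length < n := by
      have := Nat.find_min hex (show i < Nat.find hex by omega)
      omega
    have hjn : Nat.find hex ≤ n := Nat.find_min' hex (le_L _ n)
    rw [hieq] at hj
    exact Set.mem_biUnion (Finset.mem_range.2 (by omega))
      ⟨fun k h1 h2 => hgood k h1 (by omega), hi, hj⟩
  -- null sets
  have hnull : ∀ k, 1 ≤ k → μ {ω | ¬(T k ω = a ∨ T k ω = b)} = 0 := by
    intro k hk
    have hdab : Disjoint {ω | T k ω = a} {ω | T k ω = b} := by
      rw [Set.disjoint_left]
      intro ω hx hy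
      simp only [Set.mem_setOf_eq] at hx hy
      omega
    have hmb : MeasurableSet {ω | T k ω = b} := hmeas k (measurableSet_singleton b)
    have hma : MeasurableSet {ω | T k ω = a} := hmeas k (measurableSet_singleton a)
    have hu : μ ({ω | T k ω = a} ∪ {ω | T k ω = b}) = 1 := by
      rw [measure_union hdab hmb, h1 k hk, h2 k hk,
        ← ENNReal.ofReal_add hp.1.le (by linarith [hp.2])]
      norm_num
    have hcompl : μ ({ω | T k ω = a} ∪ {ω | T k ω = b})ᶜ = 0 :=
      (prob_compl_eq_zero_iff (hma.union hmb)).2 hu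
    have : {ω | ¬(T k ω = a ∨ T k ω = b)} = ({ω | T k ω = a} ∪ {ω | T k ω = b})ᶜ := by
      ext ω; simp [Set.mem_union]
    rw [this]
    exact hcompl
  -- the good set
  have hGc : μ {ω | ∀ k, 1 ≤ k → k ≤ n → T k ω = a ∨ T k ω = b}ᶜ = 0 := by
    refine measure_mono_null (fun ω hω => ?_)
      ((measure_biUnion_null_iff (Finset.Icc 1 n).countable_toSet).2
        (fun k hk => hnull k (Finset.mem_Icc.1 hk).1))
    simp only [Set.mem_compl_iff, Set.mem_setOf_eq, not_forall] at hω
    obtain ⟨k, hk1, hk2, hk3⟩ := hω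
    exact Set.mem_biUnion (Finset.mem_Icc.2 ⟨hk1, hk2⟩) hk3
  -- μ of union is 1
  have hUmeas : MeasurableSet (⋃ i ∈ Finset.range n, E i) :=
    (Finset.range n).measurableSet_biUnion (fun i _ => measE i)
  have hU1 : μ (⋃ i ∈ Finset.range n, E i) = 1 := by
    refine le_antisymm prob_le_one ?_
    have step1 : (1 : ENNReal) ≤ μ {ω | ∀ k, 1 ≤ k → k ≤ n → T k ω = a ∨ T k ω = b} := by
      have h0 : μ ({ω | ∀ k, 1 ≤ k → k ≤ n → T k ω = a ∨ T k ω = b} ∪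
          {ω | ∀ k, 1 ≤ k → k ≤ n → T k ω = a ∨ T k ω = b}ᶜ) ≤
          μ {ω | ∀ k, 1 ≤ k → k ≤ n → T k ω = a ∨ T k ω = b} +
          μ {ω | ∀ k, 1 ≤ k → k ≤ n → T k ω = a ∨ T k ω = b}ᶜ := measure_union_le _ _
      rw [Set.union_compl_self, measure_univ, hGc, add_zero] at h0
      exact h0
    exact step1.trans (measure_mono (fun ω hω => hcover ω hω))
  -- split A
  have hAsplit : μ A = ∑ i ∈ Finset.range n, μ (A ∩ E i) := by
    have hdiff : μ (A \ ⋃ i ∈ Finset.range n, E i) = 0 :=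
      measure_mono_null (fun ω hω hg => hω.2 (hcover ω hg)) hGc
    have : μ A = μ (A ∩ ⋃ i ∈ Finset.range n, E i) := by
      rw [← measure_inter_add_diff A hUmeas, hdiff, add_zero]
    rw [this, Set.inter_iUnion₂]
    rw [measure_biUnion_finset ?_ (fun i _ => measA.inter (measE i))]
    · intro i hi j hj hij
      exact ((hpd i j hij).mono Set.inter_subset_right Set.inter_subset_right)
  -- each term
  have hterm : ∀ i ∈ Finset.range n, μ (A ∩ E i) = μ (E i) * ENNReal.ofReal p := by
    intro i _
    rcases Nat.eq_zero_or_pos i with rfl | hipos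
    · have hE0 : E 0 ⊆ {ω | ¬(T 1 ω = a ∨ T 1 ω = b)} := by
        rintro ω ⟨_, _, h3⟩ hc
        have hL1 : (W (fun k => T k ω) (0 + 1)).length = T 1 ω :=
          L_one _ (by rcases hc with h | h <;> omega)
        rw [hL1] at h3
        rcases hc with h | h <;> omega
      have h0 : μ (E 0) = 0 := measure_mono_null hE0 (hnull 1 le_rfl)
      rw [measure_mono_null Set.inter_subset_right h0, h0, zero_mul]
    · have hAE : A ∩ E i = E i ∩ {ω | T (i + 1) ω = a} := by
        ext ω
        constructor
        · rintro ⟨hAω, hEω⟩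
          refine ⟨hEω, ?_⟩
          have hds := dirSeq_eq (fun k => T k ω) hEω.2.1 hEω.2.2
          beta_reduce at hds
          simp only [Set.mem_setOf_eq] at hAω ⊢
          rw [← hds]; exact hAω
        · rintro ⟨hEω, hTω⟩
          refine ⟨?_, hEω⟩
          have hds := dirSeq_eq (fun k => T k ω) hEω.2.1 hEω.2.2
          beta_reduce at hds
          exact hds.trans hTω
      rw [hAE]
      -- independence
      set S : Finset ℕ := Finset.Icc 1 i with hS
      have hST : Disjoint S ({i + 1} : Finset ℕ) := by
        rw [Finset.disjoint_singleton_right, hS, Finset.mem_Icc]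
        omega
      have hIF := hindep.indepFun_finset S {i + 1} hST hmeas
      set ex : (↥S → ℕ) → (ℕ → ℕ) := fun v k => if h : k ∈ S then v ⟨k, h⟩ else 0 with hex
      set B : Set (↥S → ℕ) := {v |
        (∀ k, 1 ≤ k → k ≤ i → ex v k = a ∨ ex v k = b) ∧
        (W (ex v) i).length < n ∧
        n ≤ (W (ex v) i).length + (W (ex v) i).getD i 1} with hB
      have hEB : E i = (fun ω (k : ↥S) => T k ω) ⁻¹' B := by
        ext ω
        have hagree : ∀ k, 1 ≤ k → k ≤ i → ex (fun k : ↥S => T k ω) k = T k ω := by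
          intro k hk1 hk2
          rw [hex]
          simp only
          rw [dif_pos (by rw [hS]; exact Finset.mem_Icc.2 ⟨hk1, hk2⟩)]
        have hW : W (ex (fun k : ↥S => T k ω)) i = W (fun k => T k ω) i := W_congr i hagree
        simp only [Set.mem_preimage, hB, Set.mem_setOf_eq, hEdef]
        constructor
        · rintro ⟨hg, hlt, hle⟩
          refine ⟨fun k hk1 hk2 => by rw [hagree k hk1 hk2]; exact hg k hk1 hk2,
            by rw [hW]; exact hlt, ?_⟩
          rw [hW, ← L_succ_eq (fun k => T k ω) ha2 hb2 i hipos hg]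
          exact hle
        · rintro ⟨hg, hlt, hle⟩
          have hg' : ∀ k, 1 ≤ k → k ≤ i → T k ω = a ∨ T k ω = b :=
            fun k hk1 hk2 => by rw [← hagree k hk1 hk2]; exact hg k hk1 hk2
          refine ⟨hg', by rw [← hW]; exact hlt, ?_⟩
          rw [L_succ_eq (fun k => T k ω) ha2 hb2 i hipos hg', ← hW]
          exact hle
      have hTset : {ω | T (i + 1) ω = a} =
          (fun ω (k : ↥({i + 1} : Finset ℕ)) => T k ω) ⁻¹'
            {u | u ⟨i + 1, Finset.mem_singleton_self _⟩ = a} := rfl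
      rw [hEB, hTset,
        hIF.measure_inter_preimage_eq_mul _ _ (Set.to_countable B).measurableSet
          (Set.to_countable _).measurableSet]
      congr 1
      rw [← hTset]
      exact h1 (i + 1) (by omega)
  -- assemble
  have hsum1 : ∑ i ∈ Finset.range n, μ (E i) = 1 := by
    rw [← measure_biUnion_finset (fun i _ j _ hij => hpd i j hij) (fun i _ => measE i)]
    exact hU1
  rw [hAsplit, Finset.sum_congr rfl hterm, ← Finset.sum_mul, hsum1, one_mul]
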